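/- arXiv:1604.01326 — 3 statements merged into one kernel-verified Lean document; each statement's English description precedes it below -/
import Mathlib

section
/- For any nonzero complex numbers s and any integers j, k, the identity A(s^k) = {1-k}_s · A(1) + {k}_s · A(s) holds, where {k}_s = (s^k - s^{-k})/(s - s^{-1}) if s ∉ {1,-1} and {k}_s = k·s^{k-1} if s ∈ {1,-1}. -/
open Matrix Complex

noncomputable def A (a : ℂ) : Matrix (Fin 2) (Fin 2) ℂ :=
  (1/2 : ℂ) • !![(a + a⁻¹) * I, a - a⁻¹; a - a⁻¹, -((a + a⁻¹) * I)]

/-- The quantity `{k}_s`. -/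
noncomputable def brace (s : ℂ) (k : ℤ) : ℂ :=
  if s = 1 ∨ s = -1 then (k : ℂ) * s ^ (k - 1) else (s ^ k - s ^ (-k)) / (s - s⁻¹)

lemma neg_one_zpow_inv (k : ℤ) : ((-1 : ℂ) ^ k)⁻¹ = (-1 : ℂ) ^ k := by
  rcases Int.even_or_odd k with he | ho
  · rw [he.neg_one_zpow]; norm_num
  · rw [ho.neg_one_zpow]; norm_num

lemma sub_inv_ne_zero (s : ℂ) (hs : s ≠ 0) (h : ¬(s = 1 ∨ s = -1)) : s - s⁻¹ ≠ 0 := by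
  intro hd
  apply h
  have h1 : s * s = 1 := by
    have := sub_eq_zero.mp hd
    field_simp at this
    linear_combination this
  have h2 : (s - 1) * (s + 1) = 0 := by linear_combination h1
  rcases mul_eq_zero.mp h2 with h3 | h3
  · exact Or.inl (by linear_combination h3)
  · exact Or.inr (by linear_combination h3)

lemma brace_sub (s : ℂ) (hs : s ≠ 0) (k : ℤ) :
    brace s k * (s - s⁻¹) = s ^ k - (s ^ k)⁻¹ := by
  unfold brace
  by_cases h : s = 1 ∨ s = -1
  · simp only [if_pos h]
    rcases h with h | h <;> subst h
    · simp
    · rw [neg_one_zpow_inv]; norm_num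
  · simp only [if_neg h]
    rw [_root_.zpow_neg, div_mul_cancel₀ _ (sub_inv_ne_zero s hs h)]

lemma brace_add (s : ℂ) (hs : s ≠ 0) (k : ℤ) :
    brace s (1 - k) * 2 + brace s k * (s + s⁻¹) = s ^ k + (s ^ k)⁻¹ := by
  have hk : (s : ℂ) ^ k ≠ 0 := zpow_ne_zero k hs
  unfold brace
  by_cases h : s = 1 ∨ s = -1
  · simp only [if_pos h]
    rcases h with h | h <;> subst h
    · push_cast; simp; ring
    · push_cast
      have e1 : (-1 : ℂ) ^ (1 - k - 1) = ((-1:ℂ)^k)⁻¹ := by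
        rw [show (1:ℤ) - k - 1 = -k by ring, _root_.zpow_neg]
      have e2 : (-1 : ℂ) ^ (k - 1) = (-1:ℂ)^k * (-1:ℂ)⁻¹ := by
        rw [zpow_sub₀ (by norm_num : (-1:ℂ) ≠ 0), zpow_one, _root_.div_eq_mul_inv]
      rw [e1, e2, neg_one_zpow_inv]
      norm_num
      ring
  · simp only [if_neg h]
    have hd := sub_inv_ne_zero s hs h
    have e1 : s ^ (1 - k) = s * (s ^ k)⁻¹ := by
      rw [zpow_sub₀ hs, zpow_one, _root_.div_eq_mul_inv]
    have e2 : s ^ (-(1 - k)) = s⁻¹ * s ^ k := by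
      rw [neg_sub, zpow_sub₀ hs, zpow_one, _root_.div_eq_mul_inv]
      ring
    have e3 : s ^ (-k) = (s ^ k)⁻¹ := _root_.zpow_neg s k
    rw [e1, e2, e3, div_mul_eq_mul_div, div_mul_eq_mul_div, ← add_div,
      div_eq_iff hd]
    field_simp
    ring

theorem stmt_5 (s : ℂ) (hs : s ≠ 0) (k : ℤ) :
    A (s ^ k) = brace s (1 - k) • A 1 + brace s k • A s := by
  have h1 := brace_sub s hs k
  have h2 := brace_add s hs k
  unfold A
  ext i j
  fin_cases i <;> fin_cases j <;>
    simp [Matrix.add_apply, Matrix.smul_apply, smul_eq_mul]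
  · linear_combination (-I/2) * h2
  · linear_combination (-1/2 : ℂ) * h1
  · linear_combination (-1/2 : ℂ) * h1
  · linear_combination (I/2) * h2
end

section
/- Let Z, W ∈ SL(2,ℂ) with tr(Z) = tr(W) = 0 and suppose -tr(ZW) = 2a with a ∈ {1,-1} and W ≠ a·Z. Then there is no P ∈ SL(2,ℂ) with P·Z·P⁻¹ = A(1) and P·W·P⁻¹ = A(s) for any s ∈ ℂ^× with s + s^{-1} = 2a; however, there exists P ∈ SL(2,ℂ) with P·Z·P⁻¹ = A(1) and P·W·P⁻¹ ∈ {S_a, S'_a}, where S_a = [[ai, 1],[0, -ai]] and S'_a = [[ai, 0],[1, -ai]]. -/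
open Matrix Complex

noncomputable def S (a : ℂ) : Matrix (Fin 2) (Fin 2) ℂ := !![a * I, 1; 0, -(a * I)]

noncomputable def S' (a : ℂ) : Matrix (Fin 2) (Fin 2) ℂ := !![a * I, 0; 1, -(a * I)]

private lemma A_one : A 1 = !![I, 0; 0, -I] := by
  unfold A
  norm_num
  ring

private lemma my_conj_eq {P M N : Matrix (Fin 2) (Fin 2) ℂ} (hd : IsUnit P.det)
    (h : P * M = N * P) : P * M * P⁻¹ = N := by
  rw [h, Matrix.mul_assoc, Matrix.mul_nonsing_inv _ hd, Matrix.mul_one]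

private lemma my_conj_cancel {P M N : Matrix (Fin 2) (Fin 2) ℂ} (hd : IsUnit P.det)
    (h : P * M * P⁻¹ = P * N * P⁻¹) : M = N := by
  have h1 := congrArg (· * P) h
  simp only [Matrix.nonsing_inv_mul_cancel_right _ _ hd] at h1
  have h2 := congrArg (P⁻¹ * ·) h1
  simp only [← Matrix.mul_assoc, Matrix.nonsing_inv_mul _ hd, Matrix.one_mul] at h2
  exact h2

private lemma my_conj_mul {P M N : Matrix (Fin 2) (Fin 2) ℂ} (hd : IsUnit P.det) :
    P * (M * N) * P⁻¹ = (P * M * P⁻¹) * (P * N * P⁻¹) := by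
  simp only [Matrix.mul_assoc, Matrix.nonsing_inv_mul_cancel_left _ _ hd]

private lemma my_conj_comp {Q P M : Matrix (Fin 2) (Fin 2) ℂ} :
    (Q * P) * M * (Q * P)⁻¹ = Q * (P * M * P⁻¹) * Q⁻¹ := by
  rw [Matrix.mul_inv_rev]
  simp only [Matrix.mul_assoc]

private lemma my_trace_conj {P M : Matrix (Fin 2) (Fin 2) ℂ} (hd : IsUnit P.det) :
    (P * M * P⁻¹).trace = M.trace := by
  rw [Matrix.trace_mul_comm, ← Matrix.mul_assoc, Matrix.nonsing_inv_mul _ hd, Matrix.one_mul]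

-- diagonalization when lower-left entry nonzero
private lemma diag_c {Z : Matrix (Fin 2) (Fin 2) ℂ} (hZd : Z.det = 1) (hZt : Z.trace = 0)
    (hc : Z 1 0 ≠ 0) : ∃ P : Matrix (Fin 2) (Fin 2) ℂ, P.det = 1 ∧ P * Z * P⁻¹ = A 1 := by
  have h11 : Z 1 1 = -Z 0 0 := by
    have h := Matrix.trace_fin_two Z
    rw [hZt] at h
    linear_combination -h
  set z := Z 0 0 with hz
  set b := Z 0 1 with hb
  set c := Z 1 0 with hcdef
  have hrel : z * z + b * c = -1 := by
    have hd := Matrix.det_fin_two Z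
    rw [hZd, h11] at hd
    linear_combination hd
  have hZeta : Z = !![z, b; c, -z] := by
    rw [Matrix.eta_fin_two Z, h11]
  have hPdet : Matrix.det !![1/(2*I), -(z - I)/(2*I*c); -c, z + I] = 1 := by
    rw [Matrix.det_fin_two_of]
    field_simp
    ring
  refine ⟨!![1/(2*I), -(z - I)/(2*I*c); -c, z + I], hPdet, ?_⟩
  apply my_conj_eq (by rw [hPdet]; exact isUnit_one)
  rw [hZeta, A_one, Matrix.mul_fin_two, Matrix.mul_fin_two]
  ext i j
  fin_cases i <;> fin_cases j <;>
    simp only [Matrix.cons_val', Matrix.cons_val_zero, Matrix.cons_val_one, Matrix.head_cons,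
      Matrix.empty_val', Matrix.cons_val_fin_one, Matrix.head_fin_const, Matrix.of_apply, Fin.zero_eta, Fin.mk_one] <;>
    field_simp
  · ring
  · linear_combination hrel - Complex.I_sq
  · ring
  · linear_combination (-2*c*I) * hrel + (2*c*I) * Complex.I_sq

-- general diagonalization
private lemma diag_all {Z : Matrix (Fin 2) (Fin 2) ℂ} (hZd : Z.det = 1) (hZt : Z.trace = 0) :
    ∃ P : Matrix (Fin 2) (Fin 2) ℂ, P.det = 1 ∧ P * Z * P⁻¹ = A 1 := by
  have h11 : Z 1 1 = -Z 0 0 := by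
    have h := Matrix.trace_fin_two Z
    rw [hZt] at h
    linear_combination -h
  by_cases hc : Z 1 0 ≠ 0
  · exact diag_c hZd hZt hc
  push_neg at hc
  set z := Z 0 0 with hz
  set b := Z 0 1 with hb
  have hZeta : Z = !![z, b; 0, -z] := by
    rw [Matrix.eta_fin_two Z, h11, hc]
  have hJd : Matrix.det !![(0:ℂ), 1; -1, 0] = 1 := by
    rw [Matrix.det_fin_two_of]; ring
  have hJu : IsUnit (Matrix.det !![(0:ℂ), 1; -1, 0]) := by rw [hJd]; exact isUnit_one
  have hJinv : (!![(0:ℂ), 1; -1, 0])⁻¹ = !![0, -1; 1, 0] := by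
    apply Matrix.inv_eq_right_inv
    rw [Matrix.mul_fin_two]
    norm_num
    exact Matrix.one_fin_two.symm
  by_cases hbne : b ≠ 0
  · -- swap to put nonzero entry lower-left
    set Z' := !![(0:ℂ), 1; -1, 0] * Z * (!![(0:ℂ), 1; -1, 0])⁻¹ with hZ'
    have hZ'eta : Z' = !![-z, 0; -b, z] := by
      rw [hZ', hZeta, hJinv, Matrix.mul_fin_two, Matrix.mul_fin_two]
      norm_num
    have hZ'd : Z'.det = 1 := by
      rw [hZ'eta, Matrix.det_fin_two_of]
      have hd := Matrix.det_fin_two Z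
      rw [hZd, h11, hc] at hd
      linear_combination -hd
    have hZ't : Z'.trace = 0 := by rw [hZ'eta, Matrix.trace_fin_two]; simp
    have hZ'c : Z' 1 0 ≠ 0 := by
      rw [hZ'eta]
      simpa using hbne
    obtain ⟨P, hPd, hPZ⟩ := diag_c hZ'd hZ't hZ'c
    refine ⟨P * !![(0:ℂ), 1; -1, 0], ?_, ?_⟩
    · rw [Matrix.det_mul, hPd, hJd, one_mul]
    · rw [my_conj_comp, ← hZ', hPZ]
  · -- Z is diagonal with z^2 = -1
    push_neg at hbne
    have hz2 : z * z = -1 := by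
      have hd := Matrix.det_fin_two Z
      rw [hZd, h11, hc] at hd
      linear_combination hd
    have hcases : z = I ∨ z = -I := by
      have h0 : (z - I) * (z + I) = 0 := by
        linear_combination hz2 - Complex.I_sq
      rcases mul_eq_zero.mp h0 with h | h
      · left; linear_combination h
      · right; linear_combination h
    rcases hcases with hzI | hzI
    · refine ⟨1, Matrix.det_one, ?_⟩
      have h1inv : (1 : Matrix (Fin 2) (Fin 2) ℂ)⁻¹ = 1 := by simp
      rw [h1inv, Matrix.one_mul, Matrix.mul_one, hZeta, hbne, hzI, A_one]
    · refine ⟨!![(0:ℂ), 1; -1, 0], hJd, ?_⟩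
      apply my_conj_eq hJu
      rw [hZeta, hbne, hzI, A_one, Matrix.mul_fin_two, Matrix.mul_fin_two]
      norm_num

theorem stmt_15 (Z W : Matrix (Fin 2) (Fin 2) ℂ)
    (hZd : Z.det = 1) (hWd : W.det = 1) (hZt : Z.trace = 0) (hWt : W.trace = 0)
    (a : ℂ) (ha : a = 1 ∨ a = -1) (htr : -(Z * W).trace = 2 * a) (hW : W ≠ a • Z) :
    (¬ ∃ (P : Matrix (Fin 2) (Fin 2) ℂ) (s : ℂ), P.det = 1 ∧ s ≠ 0 ∧ s + s⁻¹ = 2 * a ∧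
        P * Z * P⁻¹ = A 1 ∧ P * W * P⁻¹ = A s) ∧
    (∃ P : Matrix (Fin 2) (Fin 2) ℂ, P.det = 1 ∧ P * Z * P⁻¹ = A 1 ∧
        (P * W * P⁻¹ = S a ∨ P * W * P⁻¹ = S' a)) := by
  have ha2 : a * a = 1 := by rcases ha with rfl | rfl <;> norm_num
  constructor
  · rintro ⟨P, s, hPd, hs0, hsum, hPZ, hPW⟩
    have hPu : IsUnit P.det := by rw [hPd]; exact isUnit_one
    have hsa : s = a := by
      have h1 : s * s + 1 = 2 * a * s := by
        field_simp at hsum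
        linear_combination hsum
      have h2 : (s - a) * (s - a) = 0 := by linear_combination h1 + ha2
      have h3 := mul_self_eq_zero.mp h2
      linear_combination h3
    have hAs : A s = a • A 1 := by
      rw [hsa]
      rcases ha with rfl | rfl
      · simp
      · rw [A_one]
        unfold A
        norm_num
        ring
    have hkey : P * W * P⁻¹ = P * (a • Z) * P⁻¹ := by
      rw [hPW, hAs, ← hPZ, Matrix.mul_smul, Matrix.smul_mul]
    exact hW (my_conj_cancel hPu hkey)
  · obtain ⟨P₀, hP₀d, hP₀Z⟩ := diag_all hZd hZt
    have hP₀u : IsUnit P₀.det := by rw [hP₀d]; exact isUnit_one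
    obtain ⟨W', hW'def⟩ : ∃ X : Matrix (Fin 2) (Fin 2) ℂ, X = P₀ * W * P₀⁻¹ := ⟨_, rfl⟩
    have hW't : W' 0 0 + W' 1 1 = 0 := by
      have h := my_trace_conj (M := W) hP₀u
      rw [hWt, ← hW'def] at h
      rw [← Matrix.trace_fin_two]
      exact h
    have htrAW : (A 1 * W').trace = -(2 * a) := by
      rw [hW'def, ← hP₀Z, ← my_conj_mul hP₀u, my_trace_conj hP₀u]
      linear_combination -htr
    have h00 : W' 0 0 = a * I := by
      rw [A_one] at htrAW
      have hE : I * W' 0 0 + (0 * W' 0 1 + (0 * W' 1 0 + -I * W' 1 1)) = -(2*a) := by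
        have h := htrAW
        rw [Matrix.trace_fin_two, Matrix.mul_apply, Matrix.mul_apply, Fin.sum_univ_two] at h
        simpa using h
      have h2 : (2*I) * W' 0 0 = (2*I) * (a * I) := by
        linear_combination hE + I * hW't - 2*a*Complex.I_sq
      exact mul_left_cancel₀ (by simp [Complex.I_ne_zero]) h2
    have h11 : W' 1 1 = -(a * I) := by linear_combination hW't - h00
    have hW'd : W'.det = 1 := by
      rw [hW'def]
      simp [Matrix.det_mul, Matrix.det_nonsing_inv, hP₀d, hWd]
    have hbc : W' 0 1 * W' 1 0 = 0 := by
      have hd := Matrix.det_fin_two W'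
      rw [hW'd, h00, h11] at hd
      linear_combination hd - a*a*Complex.I_sq + ha2
    have hne : ¬ (W' 0 1 = 0 ∧ W' 1 0 = 0) := by
      rintro ⟨hb0, hc0⟩
      apply hW
      apply my_conj_cancel hP₀u
      rw [← hW'def, Matrix.mul_smul, Matrix.smul_mul, hP₀Z]
      rw [Matrix.eta_fin_two W', h00, h11, hb0, hc0, A_one]
      ext i j
      fin_cases i <;> fin_cases j <;> simp
    rcases eq_or_ne (W' 0 1) 0 with hb0 | hbne
    · -- lower triangular case : S' a
      have hcne : W' 1 0 ≠ 0 := fun h => hne ⟨hb0, h⟩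
      obtain ⟨t, ht⟩ : ∃ t : ℂ, t ^ 2 = W' 1 0 :=
        IsAlgClosed.exists_pow_nat_eq (W' 1 0) (n := 2) (by norm_num)
      have htne : t ≠ 0 := by
        intro h0
        apply hcne
        rw [← ht, h0]
        ring
      have hDd : Matrix.det !![t, 0; 0, t⁻¹] = 1 := by
        rw [Matrix.det_fin_two_of]
        field_simp
        norm_num
      have hDu : IsUnit (Matrix.det !![t, 0; 0, t⁻¹]) := by rw [hDd]; exact isUnit_one
      refine ⟨!![t, 0; 0, t⁻¹] * P₀, by rw [Matrix.det_mul, hDd, hP₀d, one_mul], ?_, Or.inr ?_⟩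
      · rw [my_conj_comp, hP₀Z]
        apply my_conj_eq hDu
        rw [A_one, Matrix.mul_fin_two, Matrix.mul_fin_two]
        ext i j
        fin_cases i <;> fin_cases j <;> simp <;> ring
      · rw [my_conj_comp, ← hW'def]
        apply my_conj_eq hDu
        rw [Matrix.eta_fin_two W', h00, h11, hb0]
        unfold S'
        rw [Matrix.mul_fin_two, Matrix.mul_fin_two]
        ext i j
        fin_cases i <;> fin_cases j <;>
          simp only [Matrix.cons_val', Matrix.cons_val_zero, Matrix.cons_val_one, Matrix.head_cons,
            Matrix.empty_val', Matrix.cons_val_fin_one, Matrix.head_fin_const, Matrix.of_apply, Fin.zero_eta, Fin.mk_one] <;>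
          (try field_simp) <;>
          first
            | ring1
            | linear_combination ht
            | linear_combination -ht
            | (rw [← hW'def]; linear_combination ht)
            | (rw [← hW'def]; linear_combination -ht)
    · -- upper triangular case : S a
      have hc0 : W' 1 0 = 0 := by
        rcases mul_eq_zero.mp hbc with h | h
        · exact absurd h hbne
        · exact h
      obtain ⟨t, ht⟩ : ∃ t : ℂ, t ^ 2 = (W' 0 1)⁻¹ :=
        IsAlgClosed.exists_pow_nat_eq (W' 0 1)⁻¹ (n := 2) (by norm_num)
      have htne : t ≠ 0 := by
        intro h0
        have hz : (W' 0 1)⁻¹ = 0 := by rw [← ht, h0]; ring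
        exact hbne (inv_eq_zero.mp hz)
      have ht' : t ^ 2 * W' 0 1 = 1 := by rw [ht]; field_simp
      have hDd : Matrix.det !![t, 0; 0, t⁻¹] = 1 := by
        rw [Matrix.det_fin_two_of]
        field_simp
        norm_num
      have hDu : IsUnit (Matrix.det !![t, 0; 0, t⁻¹]) := by rw [hDd]; exact isUnit_one
      refine ⟨!![t, 0; 0, t⁻¹] * P₀, by rw [Matrix.det_mul, hDd, hP₀d, one_mul], ?_, Or.inl ?_⟩
      · rw [my_conj_comp, hP₀Z]
        apply my_conj_eq hDu
        rw [A_one, Matrix.mul_fin_two, Matrix.mul_fin_two]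
        ext i j
        fin_cases i <;> fin_cases j <;> simp <;> ring
      · rw [my_conj_comp, ← hW'def]
        apply my_conj_eq hDu
        rw [Matrix.eta_fin_two W', h00, h11, hc0]
        unfold S
        rw [Matrix.mul_fin_two, Matrix.mul_fin_two]
        ext i j
        fin_cases i <;> fin_cases j <;>
          simp only [Matrix.cons_val', Matrix.cons_val_zero, Matrix.cons_val_one, Matrix.head_cons,
            Matrix.empty_val', Matrix.cons_val_fin_one, Matrix.head_fin_const, Matrix.of_apply, Fin.zero_eta, Fin.mk_one] <;>
          (try field_simp) <;>
          first
            | ring1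
            | linear_combination ht'
            | linear_combination -ht'
end

section
/- Let Z, W ∈ SL(2,ℂ) with tr(Z) = tr(W) = 0 and tr(ZW) ∉ {2, -2}. Then there exist P ∈ SL(2,ℂ) and s ∈ ℂ^× with s + s^{-1} = -tr(ZW) such that P·Z·P⁻¹ = A(1) and P·W·P⁻¹ = A(s). -/
open Matrix Complex

lemma sq_eq_neg_one (M : Matrix (Fin 2) (Fin 2) ℂ) (hd : M.det = 1) (ht : M.trace = 0) :
    M * M = -1 := by
  have h11 : M 1 1 = -(M 0 0) := by
    rw [Matrix.trace_fin_two] at ht; linear_combination ht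
  rw [Matrix.det_fin_two] at hd
  ext i j
  fin_cases i <;> fin_cases j <;>
    simp [Matrix.mul_apply, Fin.sum_univ_two, Matrix.one_apply] <;>
    first
      | linear_combination M 0 0 * h11 - hd
      | linear_combination M 0 1 * h11
      | linear_combination M 1 0 * h11
      | linear_combination M 1 1 * h11 - hd

lemma anti_comm (Z W : Matrix (Fin 2) (Fin 2) ℂ) (hZt : Z.trace = 0) (hWt : W.trace = 0) :
    Z * W + W * Z = (Z * W).trace • (1 : Matrix (Fin 2) (Fin 2) ℂ) := by
  rw [Matrix.trace_fin_two] at hZt hWt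
  ext i j
  fin_cases i <;> fin_cases j <;>
    simp [Matrix.mul_apply, Matrix.trace_fin_two, Fin.sum_univ_two, Matrix.one_apply] <;>
    first
      | linear_combination W 0 0 * hZt - Z 1 1 * hWt
      | linear_combination W 0 1 * hZt + Z 0 1 * hWt
      | linear_combination Z 1 0 * hWt + W 1 0 * hZt
      | linear_combination 2 * W 1 1 * hZt - 2 * Z 0 0 * hWt
      | linear_combination W 1 1 * hZt - Z 0 0 * hWt

theorem stmt_16 (Z W : Matrix (Fin 2) (Fin 2) ℂ)
    (hZd : Z.det = 1) (hWd : W.det = 1) (hZt : Z.trace = 0) (hWt : W.trace = 0)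
    (htr : (Z * W).trace ≠ 2 ∧ (Z * W).trace ≠ -2) :
    ∃ (P : Matrix (Fin 2) (Fin 2) ℂ) (s : ℂ), P.det = 1 ∧ s ≠ 0 ∧
      s + s⁻¹ = -(Z * W).trace ∧ P * Z * P⁻¹ = A 1 ∧ P * W * P⁻¹ = A s := by
  obtain ⟨ht2, ht2'⟩ := htr
  set t := (Z * W).trace with htdef
  -- square root of t^2 - 4
  obtain ⟨r, hr⟩ := IsAlgClosed.exists_pow_nat_eq (t ^ 2 - 4) (n := 2) (by norm_num)
  have hr0 : r ≠ 0 := by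
    intro h
    rw [h] at hr
    have : (t - 2) * (t + 2) = 0 := by linear_combination -hr
    rcases mul_eq_zero.1 this with h' | h'
    · exact ht2 (by linear_combination h')
    · exact ht2' (by linear_combination h')
  set s : ℂ := (-t + r) / 2 with hsdef
  have hmul : s * ((-t - r) / 2) = 1 := by
    rw [hsdef]
    field_simp
    linear_combination -hr
  have hs0 : s ≠ 0 := left_ne_zero_of_mul_eq_one hmul
  have hsinv : s⁻¹ = (-t - r) / 2 := inv_eq_of_mul_eq_one_right hmul
  have hsum : s + s⁻¹ = -t := by rw [hsinv, hsdef]; ring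
  have hdiff : s - s⁻¹ = r := by rw [hsinv, hsdef]; ring
  -- matrix algebra facts
  have hZ2 : Z * Z = -1 := sq_eq_neg_one Z hZd hZt
  have hW2 : W * W = -1 := sq_eq_neg_one W hWd hWt
  have hanti : Z * W + W * Z = t • (1 : Matrix (Fin 2) (Fin 2) ℂ) := anti_comm Z W hZt hWt
  -- eigenvector of Z with eigenvalue I
  have hfac : (Z - I • 1) * (Z + I • 1) = 0 := by
    have : (Z - I • 1) * (Z + I • 1) = Z * Z - (I * I) • 1 := by
      simp only [sub_mul, mul_add, Matrix.smul_mul, Matrix.mul_smul, one_mul, mul_one,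
        smul_smul]
      abel
    rw [this, hZ2, Complex.I_mul_I]
    simp
  have hdet1 : (Z - I • 1).det = 0 := by
    by_contra h
    have hinv : IsUnit (Z - I • 1).det := isUnit_iff_ne_zero.2 h
    have h0 : Z + I • 1 = 0 := by
      calc Z + I • 1 = (Z - I • 1)⁻¹ * ((Z - I • 1) * (Z + I • 1)) := by
            rw [← mul_assoc, Matrix.nonsing_inv_mul _ hinv, one_mul]
        _ = 0 := by rw [hfac, mul_zero]
    have := congrArg Matrix.trace h0
    rw [Matrix.trace_add, hZt, Matrix.trace_smul, Matrix.trace_zero, Matrix.trace_one] at this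
    simp at this
  obtain ⟨q₁, hq₁0, hq₁⟩ := (Matrix.exists_mulVec_eq_zero_iff).2 hdet1
  have hz1 : Z.mulVec q₁ = I • q₁ := by
    rw [Matrix.sub_mulVec, Matrix.smul_mulVec, Matrix.one_mulVec, sub_eq_zero] at hq₁
    exact hq₁
  set w : Fin 2 → ℂ := W.mulVec q₁ with hwdef
  have hWw : W.mulVec w = -q₁ := by
    rw [hwdef, Matrix.mulVec_mulVec, hW2]
    simp [Matrix.neg_mulVec]
  have hZw : Z.mulVec w = t • q₁ - I • w := by
    rw [hwdef, Matrix.mulVec_mulVec]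
    have hZW : Z * W = t • 1 - W * Z := by
      rw [← hanti]; abel
    rw [hZW, Matrix.sub_mulVec, Matrix.smul_mulVec, Matrix.one_mulVec,
      ← Matrix.mulVec_mulVec, hz1, Matrix.mulVec_smul]
  -- componentwise forms
  have hz1' : ∀ j, Z j 0 * q₁ 0 + Z j 1 * q₁ 1 = I * q₁ j := by
    intro j
    have := congrFun hz1 j
    simpa [Matrix.mulVec, dotProduct, Fin.sum_univ_two] using this
  have hw1c : ∀ j, W j 0 * q₁ 0 + W j 1 * q₁ 1 = w j := by
    intro j
    fin_cases j <;> simp [hwdef, Matrix.mulVec, dotProduct, Fin.sum_univ_two]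
  have hWw' : ∀ j, W j 0 * w 0 + W j 1 * w 1 = -q₁ j := by
    intro j
    have := congrFun hWw j
    simpa [Matrix.mulVec, dotProduct, Fin.sum_univ_two] using this
  have hZw' : ∀ j, Z j 0 * w 0 + Z j 1 * w 1 = t * q₁ j - I * w j := by
    intro j
    have := congrFun hZw j
    simpa [Matrix.mulVec, dotProduct, Fin.sum_univ_two] using this
  set u : ℂ := 2 / r with hudef
  have hu : r * u = 2 := by rw [hudef]; field_simp
  set q₂ : Fin 2 → ℂ := fun j => u * (w j + (I * t / 2) * q₁ j) with hq₂def
  have hq₂ : ∀ j, q₂ j = u * (w j + (I * t / 2) * q₁ j) := fun j => rfl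
  have hz2' : ∀ j, Z j 0 * q₂ 0 + Z j 1 * q₂ 1 = -I * q₂ j := by
    intro j
    simp only [hq₂]
    linear_combination u * hZw' j + (u * I * t / 2) * hz1' j + (u * t * q₁ j) * Complex.I_sq
  have hw1' : ∀ j, W j 0 * q₁ 0 + W j 1 * q₁ 1
      = (s + s⁻¹) * I / 2 * q₁ j + (s - s⁻¹) / 2 * q₂ j := by
    intro j
    rw [hsum, hdiff]
    simp only [hq₂]
    linear_combination hw1c j - (w j / 2 + I * t / 4 * q₁ j) * hu
  have hw2' : ∀ j, W j 0 * q₂ 0 + W j 1 * q₂ 1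
      = (s - s⁻¹) / 2 * q₁ j + -((s + s⁻¹) * I / 2) * q₂ j := by
    intro j
    rw [hsum, hdiff]
    simp only [hq₂]
    linear_combination u * hWw' j + (u * I * t / 2) * hw1c j
      - (u * t ^ 2 / 4 * q₁ j) * Complex.I_sq - (u / 4 * q₁ j) * hr + (r / 4 * q₁ j) * hu
  -- the conjugating matrix
  set Q : Matrix (Fin 2) (Fin 2) ℂ := !![q₁ 0, q₂ 0; q₁ 1, q₂ 1] with hQdef
  have hZQ : Z * Q = Q * A 1 := by
    ext i j
    fin_cases i <;> fin_cases j <;>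
      simp [hQdef, A, Matrix.mul_apply, Fin.sum_univ_two] <;>
      first
        | linear_combination hz1' 0
        | linear_combination hz2' 0
        | linear_combination hz1' 1
        | linear_combination hz2' 1
  have hWQ : W * Q = Q * A s := by
    ext i j
    fin_cases i <;> fin_cases j <;>
      simp [hQdef, A, Matrix.mul_apply, Fin.sum_univ_two] <;>
      first
        | linear_combination hw1' 0
        | linear_combination hw2' 0
        | linear_combination hw1' 1
        | linear_combination hw2' 1
  -- Q is invertible
  have hQdet : Q.det ≠ 0 := by
    intro h
    obtain ⟨v, hv0, hv⟩ := (Matrix.exists_mulVec_eq_zero_iff).2 h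
    have hv' : ∀ j, q₁ j * v 0 + q₂ j * v 1 = 0 := by
      intro j
      fin_cases j
      · simpa [hQdef, Matrix.mulVec, dotProduct, Fin.sum_univ_two] using congrFun hv 0
      · simpa [hQdef, Matrix.mulVec, dotProduct, Fin.sum_univ_two] using congrFun hv 1
    by_cases hv1 : v 1 = 0
    · have hv00 : v 0 ≠ 0 := by
        intro h0
        apply hv0
        funext j
        fin_cases j
        · exact h0
        · exact hv1
      apply hq₁0
      funext j
      have := hv' j
      rw [hv1] at this
      have : q₁ j * v 0 = 0 := by linear_combination this
      rcases mul_eq_zero.1 this with h' | h'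
      · exact h'
      · exact absurd h' hv00
    · set α : ℂ := -(v 0) / v 1 with hαdef
      have hα : ∀ j, u * (w j + (I * t / 2) * q₁ j) = α * q₁ j := by
        intro j
        have hj := hv' j
        rw [hq₂] at hj
        have hrhs : (-v 0 / v 1) * q₁ j = (-(v 0) * q₁ j) / v 1 := by ring
        rw [hαdef, hrhs, eq_div_iff hv1]
        linear_combination hj
      set β : ℂ := α * r / 2 - I * t / 2 with hβdef
      have hwβ : ∀ j, w j = β * q₁ j := by
        intro j
        rw [hβdef]
        linear_combination (r / 2) * hα j - ((w j + I * t / 2 * q₁ j) / 2) * hu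
      obtain ⟨k, hk⟩ := Function.ne_iff.1 hq₁0
      have hk : q₁ k ≠ 0 := by simpa using hk
      have h1 : β * β * q₁ k = (-1) * q₁ k := by
        linear_combination hWw' k - W k 0 * hwβ 0 - W k 1 * hwβ 1 - β * hw1c k - β * hwβ k
      have h2 : (2 * β * I) * q₁ k = t * q₁ k := by
        linear_combination hZw' k - Z k 0 * hwβ 0 - Z k 1 * hwβ 1 - β * hz1' k - I * hwβ k
      have hβ2 : β * β = -1 := mul_right_cancel₀ hk h1
      have ht4 : 2 * β * I = t := mul_right_cancel₀ hk h2
      have hrz : r ^ 2 = 0 := by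
        rw [hr, ← ht4]
        linear_combination 4 * I ^ 2 * hβ2 - 4 * Complex.I_sq
      exact hr0 (by simpa using pow_eq_zero_iff (n := 2) (by norm_num) |>.1 hrz)
  -- assemble
  have hQunit : IsUnit Q.det := isUnit_iff_ne_zero.2 hQdet
  obtain ⟨c, hc⟩ := IsAlgClosed.exists_pow_nat_eq Q.det (n := 2) (by norm_num)
  have hc0 : c ≠ 0 := by
    intro h
    apply hQdet
    rw [← hc, h]
    ring
  have hPinv : (c • Q⁻¹)⁻¹ = c⁻¹ • Q := by
    apply Matrix.inv_eq_right_inv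
    rw [Matrix.smul_mul, Matrix.mul_smul, smul_smul, Matrix.nonsing_inv_mul Q hQunit,
      mul_inv_cancel₀ hc0, one_smul]
  have conj : ∀ M N : Matrix (Fin 2) (Fin 2) ℂ, M * Q = Q * N →
      (c • Q⁻¹) * M * (c • Q⁻¹)⁻¹ = N := by
    intro M N hMN
    rw [hPinv, Matrix.smul_mul, Matrix.smul_mul, Matrix.mul_smul, smul_smul,
      mul_inv_cancel₀ hc0, one_smul, mul_assoc, hMN, ← mul_assoc,
      Matrix.nonsing_inv_mul Q hQunit, one_mul]
  refine ⟨c • Q⁻¹, s, ?_, hs0, ?_, conj Z (A 1) hZQ, conj W (A s) hWQ⟩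
  · rw [Matrix.det_smul, Matrix.det_nonsing_inv, Ring.inverse_eq_inv']
    simp only [Fintype.card_fin]
    rw [hc, mul_inv_cancel₀ hQdet]
  · exact hsum
end
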